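/- Fix $\lambda_0 < 0 < \lambda_1$, $\mu > 0$, and for $y \geq 0$ define $F(y,\theta) = \frac{\mu\theta e^{\lambda_1 y}}{\lambda_1-\lambda_0} - \mu\theta\int_0^\infty \frac{e^{\lambda_0 s}}{e^{\lambda_1 s} - \theta}\, ds$ for $\theta \in (0,1)$, and $L(y) = \sup_{\theta \in (0,1)} F(y,\theta)$. Then for $y > 0$: (a) $F(y, \cdot)$ is strictly concave on $(0,1)$; (b) the supremum $L(y)$ is attained at the unique $\theta^* \in (0,1)$ satisfying $\frac{e^{\lambda_1 y}}{\lambda_1-\lambda_0} = \int_0^\infty \frac{e^{\lambda_1 s}}{(e^{\lambda_1 s}-\theta^*)^2} e^{\lambda_0 s}\, ds$; (c) $L(y) > 0$. -/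

import Mathlib

open Real MeasureTheory Set Filter Topology

namespace Stmt17

lemma exp_int {b : ℝ} (hb : b < 0) :
    IntegrableOn (fun s : ℝ => Real.exp (b * s)) (Ioi (0:ℝ)) := by
  simpa using exp_neg_integrableOn_Ioi (0:ℝ) (neg_pos.2 hb)

lemma exp_int_val {b : ℝ} (hb : b < 0) :
    ∫ s in Ioi (0:ℝ), Real.exp (b * s) = -b⁻¹ := by
  have hder : ∀ x ∈ Ici (0:ℝ), HasDerivAt (fun s => Real.exp (b*s)/b) (Real.exp (b*x)) x := by
    intro x _
    have h1 : HasDerivAt (fun s : ℝ => b*s) b x := by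
      simpa using (hasDerivAt_id x).const_mul b
    have := h1.exp.div_const b
    rw [mul_div_assoc, div_self hb.ne, mul_one] at this
    exact this
  have h2 : Tendsto (fun s => Real.exp (b*s)/b) atTop (𝓝 0) := by
    have : Tendsto (fun s : ℝ => Real.exp (b*s)) atTop (𝓝 0) :=
      Real.tendsto_exp_atBot.comp (tendsto_id.const_mul_atTop_of_neg hb)
    have := this.div_const b
    simpa using this
  have := integral_Ioi_of_hasDerivAt_of_tendsto' hder (exp_int hb) h2
  rw [this, mul_zero, Real.exp_zero]
  ring


variable {lam0 lam1 : ℝ}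

lemma denom_pos {theta s : ℝ} (ht : theta < 1) (hs : 0 < s) (hlam1 : 0 < lam1) :
    0 < Real.exp (lam1 * s) - theta := by
  have : (1:ℝ) ≤ Real.exp (lam1 * s) := Real.one_le_exp (by positivity)
  linarith

lemma denom_ge {theta s : ℝ} (ht0 : 0 ≤ theta) (ht : theta < 1) (hs : 0 < s) (hlam1 : 0 < lam1) :
    (1 - theta) * Real.exp (lam1 * s) ≤ Real.exp (lam1 * s) - theta := by
  have h1 : (1:ℝ) ≤ Real.exp (lam1 * s) := Real.one_le_exp (by positivity)
  nlinarith

/-- continuity on Ioi 0 of the basic integrand -/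
lemma contOn1 {theta : ℝ} (ht : theta < 1) (hlam1 : 0 < lam1) :
    ContinuousOn (fun s : ℝ => Real.exp (lam0 * s) / (Real.exp (lam1 * s) - theta)) (Ioi 0) := by
  apply ContinuousOn.div
  · exact (Real.continuous_exp.comp (continuous_const.mul continuous_id)).continuousOn
  · exact ((Real.continuous_exp.comp (continuous_const.mul continuous_id)).sub
      continuous_const).continuousOn
  · exact fun s hs => (denom_pos ht hs hlam1).ne'

lemma contOn2 {theta : ℝ} (ht : theta < 1) (hlam1 : 0 < lam1) :
    ContinuousOn (fun s : ℝ => Real.exp (lam1 * s) / (Real.exp (lam1 * s) - theta) ^ 2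
      * Real.exp (lam0 * s)) (Ioi 0) := by
  apply ContinuousOn.mul
  · apply ContinuousOn.div
    · exact (Real.continuous_exp.comp (continuous_const.mul continuous_id)).continuousOn
    · exact (((Real.continuous_exp.comp (continuous_const.mul continuous_id)).sub
        continuous_const).pow 2).continuousOn
    · exact fun s hs => pow_ne_zero 2 (denom_pos ht hs hlam1).ne'
  · exact (Real.continuous_exp.comp (continuous_const.mul continuous_id)).continuousOn

lemma int1 (hlam0 : lam0 < 0) (hlam1 : 0 < lam1) {theta : ℝ} (ht0 : 0 ≤ theta) (ht : theta < 1) :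
    IntegrableOn (fun s : ℝ => Real.exp (lam0 * s) / (Real.exp (lam1 * s) - theta))
      (Ioi (0:ℝ)) := by
  apply Integrable.mono' (((exp_int hlam0).const_mul ((1-theta)⁻¹)))
  · exact (contOn1 ht hlam1).aestronglyMeasurable measurableSet_Ioi
  · refine (ae_restrict_iff' measurableSet_Ioi).2 (Eventually.of_forall fun s hs => ?_)
    have hd := denom_pos ht hs hlam1
    have h1 : (1:ℝ) ≤ Real.exp (lam1 * s) :=
      Real.one_le_exp (mul_pos hlam1 (mem_Ioi.1 hs)).le
    rw [Real.norm_eq_abs, abs_of_nonneg (div_nonneg (Real.exp_pos _).le hd.le)]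
    have h1t : (0:ℝ) < 1 - theta := by linarith
    calc Real.exp (lam0 * s) / (Real.exp (lam1 * s) - theta)
        ≤ Real.exp (lam0 * s) / (1 - theta) := by
          rw [div_le_div_iff₀ hd h1t]
          nlinarith [mul_le_mul_of_nonneg_left (show 1-theta ≤ Real.exp (lam1 * s) - theta
            by linarith) (Real.exp_pos (lam0*s)).le]
      _ = (1-theta)⁻¹ * Real.exp (lam0 * s) := div_eq_inv_mul _ _

lemma int2 (hlam0 : lam0 < 0) (hlam1 : 0 < lam1) {theta : ℝ} (ht0 : 0 ≤ theta) (ht : theta < 1) :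
    IntegrableOn (fun s : ℝ => Real.exp (lam1 * s) / (Real.exp (lam1 * s) - theta) ^ 2
      * Real.exp (lam0 * s)) (Ioi (0:ℝ)) := by
  have hb : lam0 - lam1 < 0 := by linarith
  apply Integrable.mono' ((exp_int hb).const_mul ((1-theta)⁻¹^2))
  · exact (contOn2 ht hlam1).aestronglyMeasurable measurableSet_Ioi
  · refine (ae_restrict_iff' measurableSet_Ioi).2 (Eventually.of_forall fun s hs => ?_)
    have hd := denom_pos ht hs hlam1
    have hg := denom_ge ht0 ht hs hlam1
    have hA : (0:ℝ) < Real.exp (lam1 * s) := Real.exp_pos _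
    have hc : (0:ℝ) < Real.exp (lam0 * s) := Real.exp_pos _
    have h1t : (0:ℝ) < 1 - theta := by linarith
    rw [Real.norm_eq_abs, abs_of_nonneg (mul_nonneg (div_nonneg hA.le (sq_nonneg _))
      hc.le)]
    have hexp : Real.exp ((lam0 - lam1) * s) = Real.exp (lam0 * s) / Real.exp (lam1 * s) := by
      rw [sub_mul, Real.exp_sub]
    rw [hexp]
    have h2 : ((1-theta) * Real.exp (lam1 * s))^2 ≤ (Real.exp (lam1 * s) - theta)^2 :=
      pow_le_pow_left₀ (by positivity) hg 2
    have key : Real.exp (lam1 * s) / (Real.exp (lam1 * s) - theta)^2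
        ≤ (1-theta)⁻¹^2 / Real.exp (lam1 * s) := by
      rw [div_le_div_iff₀ (by positivity) hA]
      calc Real.exp (lam1 * s) * Real.exp (lam1 * s)
          = (1-theta)⁻¹^2 * ((1-theta) * Real.exp (lam1 * s))^2 := by
            rw [mul_pow, ← mul_assoc, ← mul_pow, inv_mul_cancel₀ h1t.ne', one_pow, one_mul, sq]
        _ ≤ (1-theta)⁻¹^2 * (Real.exp (lam1 * s) - theta)^2 :=
            mul_le_mul_of_nonneg_left h2 (by positivity)
    calc Real.exp (lam1 * s) / (Real.exp (lam1 * s) - theta)^2 * Real.exp (lam0 * s)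
        ≤ (1-theta)⁻¹^2 / Real.exp (lam1 * s) * Real.exp (lam0 * s) :=
          mul_le_mul_of_nonneg_right key hc.le
      _ = (1-theta)⁻¹^2 * (Real.exp (lam0 * s) / Real.exp (lam1 * s)) := by ring

lemma integral_lt {f g : ℝ → ℝ} (hf : IntegrableOn f (Ioi (0:ℝ)))
    (hg : IntegrableOn g (Ioi (0:ℝ))) (h : ∀ s ∈ Ioi (0:ℝ), f s < g s) :
    ∫ s in Ioi (0:ℝ), f s < ∫ s in Ioi (0:ℝ), g s := by
  have hgf : IntegrableOn (fun s => g s - f s) (Ioi (0:ℝ)) := hg.sub hf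
  have hpos : 0 < ∫ s in Ioi (0:ℝ), (g s - f s) := by
    rw [setIntegral_pos_iff_support_of_nonneg_ae ?_ hgf]
    · refine lt_of_lt_of_le ?_ (measure_mono (fun s hs =>
        (⟨sub_ne_zero.2 (h s hs).ne', hs⟩ :
          s ∈ Function.support (fun s => g s - f s) ∩ Ioi 0)))
      simp [Real.volume_Ioi]
    · refine (ae_restrict_iff' measurableSet_Ioi).2 (Eventually.of_forall fun s hs => ?_)
      exact sub_nonneg.2 (h s hs).le
  rw [integral_sub hg hf] at hpos
  linarith

lemma key_convex {A u v p q : ℝ} (hA : 1 ≤ A) (hu : 0 < u) (hu1 : u < 1) (hv : 0 < v)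
    (hv1 : v < 1) (huv : u ≠ v) (hp : 0 < p) (hq : 0 < q) (hpq : p + q = 1) :
    (p*u+q*v)/(A-(p*u+q*v)) < p*(u/(A-u)) + q*(v/(A-v)) := by
  have hq' : q = 1 - p := by linarith
  subst hq'
  have hAu : 0 < A - u := by linarith
  have hAv : 0 < A - v := by linarith
  have hAw : 0 < A - (p*u+(1-p)*v) := by nlinarith
  have hsq : 0 < (u-v)^2 := by
    rcases (sub_ne_zero.2 huv).lt_or_gt with h|h <;> nlinarith
  have hid : p*(u/(A-u)) + (1-p)*(v/(A-v)) - (p*u+(1-p)*v)/(A-(p*u+(1-p)*v))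
      = A*p*(1-p)*(u-v)^2 / ((A-u)*(A-v)*(A-(p*u+(1-p)*v))) := by
    field_simp
    ring
  have hnum : 0 < A*p*(1-p)*(u-v)^2 :=
    mul_pos (mul_pos (mul_pos (by linarith) hp) hq) hsq
  have hden : 0 < (A-u)*(A-v)*(A-(p*u+(1-p)*v)) := by positivity
  have := div_pos hnum hden
  linarith

lemma key_tangent {A t u : ℝ} (hA : 1 ≤ A) (ht0 : 0 < t) (ht1 : t < 1) (hu0 : 0 < u)
    (hu1 : u < 1) :
    u/(A-u) + A/(A-u)^2 * (t-u) ≤ t/(A-t) := by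
  have hAt : 0 < A - t := by linarith
  have hAu : 0 < A - u := by linarith
  have hid : t/(A-t) - u/(A-u) - A/(A-u)^2*(t-u) = A*(t-u)^2/((A-t)*(A-u)^2) := by
    field_simp
    ring
  have : 0 ≤ A*(t-u)^2/((A-t)*(A-u)^2) := by positivity
  linarith

lemma bound2 (hlam1 : 0 < lam1) {theta s : ℝ} (ht0 : 0 ≤ theta) (ht : theta < 1)
    (hs : s ∈ Ioi (0:ℝ)) :
    Real.exp (lam1 * s) / (Real.exp (lam1 * s) - theta) ^ 2 * Real.exp (lam0 * s)
      ≤ (1-theta)⁻¹^2 * Real.exp ((lam0 - lam1) * s) := by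
  have hd := denom_pos ht hs hlam1
  have hg := denom_ge ht0 ht hs hlam1
  have hA : (0:ℝ) < Real.exp (lam1 * s) := Real.exp_pos _
  have hc : (0:ℝ) < Real.exp (lam0 * s) := Real.exp_pos _
  have h1t : (0:ℝ) < 1 - theta := by linarith
  have hexp : Real.exp ((lam0 - lam1) * s) = Real.exp (lam0 * s) / Real.exp (lam1 * s) := by
    rw [sub_mul, Real.exp_sub]
  rw [hexp]
  have h2 : ((1-theta) * Real.exp (lam1 * s))^2 ≤ (Real.exp (lam1 * s) - theta)^2 :=
    pow_le_pow_left₀ (by positivity) hg 2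
  have key : Real.exp (lam1 * s) / (Real.exp (lam1 * s) - theta)^2
      ≤ (1-theta)⁻¹^2 / Real.exp (lam1 * s) := by
    rw [div_le_div_iff₀ (by positivity) hA]
    calc Real.exp (lam1 * s) * Real.exp (lam1 * s)
        = (1-theta)⁻¹^2 * ((1-theta) * Real.exp (lam1 * s))^2 := by
          rw [mul_pow, ← mul_assoc, ← mul_pow, inv_mul_cancel₀ h1t.ne', one_pow, one_mul, sq]
      _ ≤ (1-theta)⁻¹^2 * (Real.exp (lam1 * s) - theta)^2 :=
          mul_le_mul_of_nonneg_left h2 (by positivity)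
  calc Real.exp (lam1 * s) / (Real.exp (lam1 * s) - theta)^2 * Real.exp (lam0 * s)
      ≤ (1-theta)⁻¹^2 / Real.exp (lam1 * s) * Real.exp (lam0 * s) :=
        mul_le_mul_of_nonneg_right key hc.le
    _ = (1-theta)⁻¹^2 * (Real.exp (lam0 * s) / Real.exp (lam1 * s)) := by ring

lemma int1_le (hlam0 : lam0 < 0) (hlam1 : 0 < lam1) {theta : ℝ} (ht0 : 0 ≤ theta)
    (ht : theta < 1) :
    ∫ s in Ioi (0:ℝ), Real.exp (lam0*s)/(Real.exp (lam1*s)-theta)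
      ≤ (1-theta)⁻¹ * (lam1-lam0)⁻¹ := by
  have hb : lam0 - lam1 < 0 := by linarith
  have h1t : (0:ℝ) < 1 - theta := by linarith
  calc ∫ s in Ioi (0:ℝ), Real.exp (lam0*s)/(Real.exp (lam1*s)-theta)
      ≤ ∫ s in Ioi (0:ℝ), (1-theta)⁻¹ * Real.exp ((lam0-lam1)*s) := by
        refine setIntegral_mono_on (int1 hlam0 hlam1 ht0 ht)
          ((exp_int hb).const_mul _) measurableSet_Ioi (fun s hs => ?_)
        have hd := denom_pos ht hs hlam1
        have hA : (0:ℝ) < Real.exp (lam1 * s) := Real.exp_pos _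
        have hc : (0:ℝ) < Real.exp (lam0 * s) := Real.exp_pos _
        have hg := denom_ge ht0 ht hs hlam1
        have hexp : Real.exp ((lam0 - lam1) * s)
            = Real.exp (lam0 * s) / Real.exp (lam1 * s) := by
          rw [sub_mul, Real.exp_sub]
        rw [hexp]
        calc Real.exp (lam0*s)/(Real.exp (lam1*s)-theta)
            ≤ Real.exp (lam0*s)/((1-theta) * Real.exp (lam1*s)) := by
              rw [div_le_div_iff₀ hd (by positivity)]
              nlinarith [mul_le_mul_of_nonneg_left hg hc.le]
          _ = (1-theta)⁻¹ * (Real.exp (lam0 * s) / Real.exp (lam1 * s)) := by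
              rw [mul_comm (1-theta), ← div_div, div_eq_inv_mul]
    _ = (1-theta)⁻¹ * (lam1-lam0)⁻¹ := by
        rw [integral_const_mul, exp_int_val hb, ← inv_neg, neg_sub]

lemma int2_le (hlam0 : lam0 < 0) (hlam1 : 0 < lam1) {theta : ℝ} (ht0 : 0 ≤ theta)
    (ht : theta < 1) :
    ∫ s in Ioi (0:ℝ), Real.exp (lam1*s)/(Real.exp (lam1*s)-theta)^2 * Real.exp (lam0*s)
      ≤ (1-theta)⁻¹^2 * (lam1-lam0)⁻¹ := by
  have hb : lam0 - lam1 < 0 := by linarith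
  calc ∫ s in Ioi (0:ℝ), Real.exp (lam1*s)/(Real.exp (lam1*s)-theta)^2 * Real.exp (lam0*s)
      ≤ ∫ s in Ioi (0:ℝ), (1-theta)⁻¹^2 * Real.exp ((lam0-lam1)*s) :=
        setIntegral_mono_on (int2 hlam0 hlam1 ht0 ht) ((exp_int hb).const_mul _)
          measurableSet_Ioi (fun s hs => bound2 hlam1 ht0 ht hs)
    _ = (1-theta)⁻¹^2 * (lam1-lam0)⁻¹ := by
        rw [integral_const_mul, exp_int_val hb, ← inv_neg, neg_sub]

lemma ftc_aux (hlam1 : 0 < lam1) {theta : ℝ} (ht0 : 0 ≤ theta) (ht : theta < 1) :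
    ∫ s in Ioc (0:ℝ) 1, lam1 * Real.exp (lam1*s) / (Real.exp (lam1*s) - theta)^2
      = (1-theta)⁻¹ - (Real.exp lam1 - theta)⁻¹ := by
  have hpos : ∀ x : ℝ, 0 ≤ x → 0 < Real.exp (lam1*x) - theta := fun x hx => by
    have : (1:ℝ) ≤ Real.exp (lam1*x) := Real.one_le_exp (mul_nonneg hlam1.le hx)
    linarith
  have hder : ∀ x ∈ uIcc (0:ℝ) 1,
      HasDerivAt (fun s => -(Real.exp (lam1*s) - theta)⁻¹)
        (lam1 * Real.exp (lam1*x) / (Real.exp (lam1*x) - theta)^2) x := by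
    intro x hx
    rw [uIcc_of_le zero_le_one] at hx
    have h1 : HasDerivAt (fun s : ℝ => Real.exp (lam1*s) - theta)
        (lam1 * Real.exp (lam1*x)) x := by
      have h0 : HasDerivAt (fun s : ℝ => lam1*s) lam1 x := by
        simpa using (hasDerivAt_id x).const_mul lam1
      simpa [mul_comm] using h0.exp.sub_const theta
    have h2 := (h1.inv (hpos x hx.1).ne').neg
    exact h2.congr_deriv (by ring)
  have hint : IntervalIntegrable
      (fun x => lam1 * Real.exp (lam1*x) / (Real.exp (lam1*x) - theta)^2) volume 0 1 := by
    apply ContinuousOn.intervalIntegrable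
    apply ContinuousOn.div
    · exact (continuous_const.mul (Real.continuous_exp.comp
        (continuous_const.mul continuous_id))).continuousOn
    · exact (((Real.continuous_exp.comp (continuous_const.mul continuous_id)).sub
        continuous_const).pow 2).continuousOn
    · intro x hx
      rw [uIcc_of_le zero_le_one] at hx
      exact pow_ne_zero 2 (hpos x hx.1).ne'
  have heq := intervalIntegral.integral_eq_sub_of_hasDerivAt hder hint
  rw [intervalIntegral.integral_of_le zero_le_one] at heq
  rw [heq, mul_one, mul_zero, Real.exp_zero]
  ring

lemma G_lower (hlam0 : lam0 < 0) (hlam1 : 0 < lam1) {theta : ℝ} (ht0 : 0 ≤ theta)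
    (ht : theta < 1) :
    Real.exp lam0 / lam1 * ((1-theta)⁻¹ - (Real.exp lam1 - theta)⁻¹)
      ≤ ∫ s in Ioi (0:ℝ), Real.exp (lam1*s)/(Real.exp (lam1*s)-theta)^2
          * Real.exp (lam0*s) := by
  have h1 : (∫ s in Ioc (0:ℝ) 1, Real.exp (lam1*s)/(Real.exp (lam1*s)-theta)^2
        * Real.exp (lam0*s))
      ≤ ∫ s in Ioi (0:ℝ), Real.exp (lam1*s)/(Real.exp (lam1*s)-theta)^2
        * Real.exp (lam0*s) := by
    apply setIntegral_mono_set (int2 hlam0 hlam1 ht0 ht) ?_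
      (HasSubset.Subset.eventuallyLE Ioc_subset_Ioi_self)
    refine (ae_restrict_iff' measurableSet_Ioi).2 (Eventually.of_forall fun s hs => ?_)
    positivity
  refine le_trans ?_ h1
  calc Real.exp lam0 / lam1 * ((1-theta)⁻¹ - (Real.exp lam1 - theta)⁻¹)
      = ∫ s in Ioc (0:ℝ) 1, Real.exp lam0 / lam1
          * (lam1 * Real.exp (lam1*s) / (Real.exp (lam1*s) - theta)^2) := by
        rw [integral_const_mul, ftc_aux hlam1 ht0 ht]
    _ ≤ ∫ s in Ioc (0:ℝ) 1, Real.exp (lam1*s)/(Real.exp (lam1*s)-theta)^2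
          * Real.exp (lam0*s) := by
        have hpos : ∀ x : ℝ, 0 ≤ x → 0 < Real.exp (lam1*x) - theta := fun x hx => by
          have : (1:ℝ) ≤ Real.exp (lam1*x) := Real.one_le_exp (mul_nonneg hlam1.le hx)
          linarith
        apply setIntegral_mono_on
        · refine (ContinuousOn.integrableOn_compact isCompact_Icc ?_).mono_set
            Ioc_subset_Icc_self
          apply ContinuousOn.mul continuousOn_const
          apply ContinuousOn.div
          · exact (continuous_const.mul (Real.continuous_exp.comp
              (continuous_const.mul continuous_id))).continuousOn
          · exact (((Real.continuous_exp.comp (continuous_const.mul continuous_id)).sub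
              continuous_const).pow 2).continuousOn
          · exact fun x hx => pow_ne_zero 2 (hpos x hx.1).ne'
        · exact (int2 hlam0 hlam1 ht0 ht).mono_set Ioc_subset_Ioi_self
        · exact measurableSet_Ioc
        · intro s hs
          have hd : 0 < Real.exp (lam1*s) - theta := hpos s hs.1.le
          have hee : Real.exp lam0 ≤ Real.exp (lam0 * s) :=
            Real.exp_le_exp.2 (by nlinarith [hs.1, hs.2])
          have h2 : Real.exp lam0 / lam1
              * (lam1 * Real.exp (lam1*s) / (Real.exp (lam1*s) - theta)^2)
              = Real.exp (lam1*s)/(Real.exp (lam1*s)-theta)^2 * Real.exp lam0 := by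
            field_simp
          rw [h2]
          exact mul_le_mul_of_nonneg_left hee (by positivity)

lemma G_cont (hlam0 : lam0 < 0) (hlam1 : 0 < lam1) {t0 : ℝ} (h0 : 0 < t0) (h1 : t0 < 1) :
    ContinuousAt (fun theta => ∫ s in Ioi (0:ℝ),
      Real.exp (lam1*s)/(Real.exp (lam1*s)-theta)^2 * Real.exp (lam0*s)) t0 := by
  set b : ℝ := (1+t0)/2 with hb
  have hb1 : b < 1 := by rw [hb]; linarith
  have hb0 : t0 < b := by rw [hb]; linarith
  have hmem : Ioo 0 b ∈ 𝓝 t0 := Ioo_mem_nhds h0 hb0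
  apply continuousAt_of_dominated (bound := fun s => (1-b)⁻¹^2 * Real.exp ((lam0-lam1)*s))
  · filter_upwards [hmem] with theta htheta
    exact (contOn2 (htheta.2.trans hb1) hlam1).aestronglyMeasurable measurableSet_Ioi
  · filter_upwards [hmem] with theta htheta
    obtain ⟨hth1, hth2⟩ := htheta
    refine (ae_restrict_iff' measurableSet_Ioi).2 (Eventually.of_forall fun s hs => ?_)
    have hd := denom_pos (hth2.trans hb1) hs hlam1
    rw [Real.norm_eq_abs, abs_of_nonneg (by positivity)]
    calc Real.exp (lam1*s)/(Real.exp (lam1*s)-theta)^2 * Real.exp (lam0*s)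
        ≤ (1-theta)⁻¹^2 * Real.exp ((lam0-lam1)*s) :=
          bound2 hlam1 hth1.le (hth2.trans hb1) hs
      _ ≤ (1-b)⁻¹^2 * Real.exp ((lam0-lam1)*s) := by
          have hbb : (0:ℝ) < 1 - b := by linarith
          have hinv : (1-theta)⁻¹ ≤ (1-b)⁻¹ := inv_anti₀ hbb (by linarith)
          have h2 : (1-theta)⁻¹^2 ≤ (1-b)⁻¹^2 :=
            pow_le_pow_left₀ (inv_nonneg.2 (by linarith)) hinv 2
          exact mul_le_mul_of_nonneg_right h2 (Real.exp_pos _).le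
  · exact ((exp_int (by linarith : lam0 - lam1 < 0)).const_mul _)
  · refine (ae_restrict_iff' measurableSet_Ioi).2 (Eventually.of_forall fun s hs => ?_)
    have hd := denom_pos h1 hs hlam1
    apply ContinuousAt.mul ?_ continuousAt_const
    apply ContinuousAt.div continuousAt_const
    · exact ((continuous_const.sub continuous_id).pow 2).continuousAt
    · exact pow_ne_zero 2 hd.ne'

lemma partA {mu y : ℝ} (hlam0 : lam0 < 0) (hlam1 : 0 < lam1) (hmu : 0 < mu) :
    StrictConcaveOn ℝ (Set.Ioo (0:ℝ) 1) (fun theta : ℝ =>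
        mu * theta * Real.exp (lam1 * y) / (lam1 - lam0) -
          mu * theta * ∫ s in Set.Ioi (0:ℝ),
            Real.exp (lam0 * s) / (Real.exp (lam1 * s) - theta)) := by
  constructor
  · exact convex_Ioo 0 1
  intro x hx z hz hne p q hp hq hpq
  simp only [smul_eq_mul]
  have hw0 : 0 < p*x+q*z := by nlinarith [hx.1, hz.1]
  have hw1 : p*x+q*z < 1 := by nlinarith [hx.2, hz.2]
  have claim : (p*x+q*z) * ∫ s in Set.Ioi (0:ℝ),
        Real.exp (lam0*s)/(Real.exp (lam1*s)-(p*x+q*z))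
      < p*(x*∫ s in Set.Ioi (0:ℝ), Real.exp (lam0*s)/(Real.exp (lam1*s)-x))
        + q*(z*∫ s in Set.Ioi (0:ℝ), Real.exp (lam0*s)/(Real.exp (lam1*s)-z)) := by
    have hfint := (int1 hlam0 hlam1 hw0.le hw1).const_mul (p*x+q*z)
    have hgx := ((int1 hlam0 hlam1 hx.1.le hx.2).const_mul x).const_mul p
    have hgz := ((int1 hlam0 hlam1 hz.1.le hz.2).const_mul z).const_mul q
    have hlt := integral_lt hfint (hgx.add hgz) (fun s hs => ?_)
    · rw [integral_const_mul] at hlt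
      simp only [Pi.add_apply] at hlt
      rw [integral_add hgx hgz, integral_const_mul, integral_const_mul,
        integral_const_mul, integral_const_mul] at hlt
      convert hlt using 2 <;> ring
    · have hA : (1:ℝ) ≤ Real.exp (lam1 * s) :=
        Real.one_le_exp (mul_pos hlam1 (mem_Ioi.1 hs)).le
      have hc : (0:ℝ) < Real.exp (lam0 * s) := Real.exp_pos _
      have hkc := key_convex hA hx.1 hx.2 hz.1 hz.2 hne hp hq hpq
      have := mul_lt_mul_of_pos_left hkc hc
      have hdx : (0:ℝ) < Real.exp (lam1*s) - x := by linarith [hx.2]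
      have hdz : (0:ℝ) < Real.exp (lam1*s) - z := by linarith [hz.2]
      have hdw : (0:ℝ) < Real.exp (lam1*s) - (p*x+q*z) := by linarith [hw1]
      have e1 : (p*x+q*z) * (Real.exp (lam0*s)/(Real.exp (lam1*s)-(p*x+q*z)))
          = Real.exp (lam0*s) * ((p*x+q*z)/(Real.exp (lam1*s)-(p*x+q*z))) := by ring
      have e2 : p*(x * (Real.exp (lam0*s)/(Real.exp (lam1*s)-x)))
          = Real.exp (lam0*s) * (p*(x/(Real.exp (lam1*s)-x))) := by ring
      have e3 : q*(z * (Real.exp (lam0*s)/(Real.exp (lam1*s)-z)))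
          = Real.exp (lam0*s) * (q*(z/(Real.exp (lam1*s)-z))) := by ring
      calc (p*x+q*z) * (Real.exp (lam0*s)/(Real.exp (lam1*s)-(p*x+q*z)))
          = Real.exp (lam0*s) * ((p*x+q*z)/(Real.exp (lam1*s)-(p*x+q*z))) := e1
        _ < Real.exp (lam0*s) * (p*(x/(Real.exp (lam1*s)-x))
              + q*(z/(Real.exp (lam1*s)-z))) := this
        _ = p*(x * (Real.exp (lam0*s)/(Real.exp (lam1*s)-x)))
              + q*(z * (Real.exp (lam0*s)/(Real.exp (lam1*s)-z))) := by ring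
  have h2 := mul_lt_mul_of_pos_left claim hmu
  have e : mu*(p*x+q*z)*Real.exp (lam1*y)/(lam1-lam0)
      = p*(mu*x*Real.exp (lam1*y)/(lam1-lam0))+q*(mu*z*Real.exp (lam1*y)/(lam1-lam0)) := by
    ring
  rw [e]
  linear_combination h2

lemma partMax {mu y : ℝ} (hlam0 : lam0 < 0) (hlam1 : 0 < lam1) (hmu : 0 < mu)
    {t : ℝ} (ht0 : 0 < t) (ht1 : t < 1)
    (heq : Real.exp (lam1 * y) / (lam1 - lam0) =
      ∫ s in Set.Ioi (0:ℝ), Real.exp (lam1 * s) / (Real.exp (lam1 * s) - t) ^ 2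
        * Real.exp (lam0 * s))
    {u : ℝ} (hu0 : 0 < u) (hu1 : u < 1) :
    mu * u * Real.exp (lam1 * y) / (lam1 - lam0) -
        mu * u * ∫ s in Set.Ioi (0:ℝ), Real.exp (lam0 * s) / (Real.exp (lam1 * s) - u)
      ≤ mu * t * Real.exp (lam1 * y) / (lam1 - lam0) -
        mu * t * ∫ s in Set.Ioi (0:ℝ), Real.exp (lam0 * s) / (Real.exp (lam1 * s) - t) := by
  have hut := (int1 hlam0 hlam1 hu0.le hu1).const_mul u
  have htt := (int1 hlam0 hlam1 ht0.le ht1).const_mul t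
  have hgt := (int2 hlam0 hlam1 ht0.le ht1).const_mul (u - t)
  have hnn : 0 ≤ ∫ s in Set.Ioi (0:ℝ),
      (u * (Real.exp (lam0*s)/(Real.exp (lam1*s)-u))
        - t * (Real.exp (lam0*s)/(Real.exp (lam1*s)-t))
        - (u-t) * (Real.exp (lam1*s)/(Real.exp (lam1*s)-t)^2 * Real.exp (lam0*s))) := by
    refine setIntegral_nonneg measurableSet_Ioi (fun s hs => ?_)
    have hA : (1:ℝ) ≤ Real.exp (lam1*s) :=
      Real.one_le_exp (mul_pos hlam1 (mem_Ioi.1 hs)).le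
    have hc : (0:ℝ) < Real.exp (lam0*s) := Real.exp_pos _
    have hkt := key_tangent hA hu0 hu1 ht0 ht1
    have key : u * (Real.exp (lam0*s)/(Real.exp (lam1*s)-u))
        - t * (Real.exp (lam0*s)/(Real.exp (lam1*s)-t))
        - (u-t) * (Real.exp (lam1*s)/(Real.exp (lam1*s)-t)^2 * Real.exp (lam0*s))
        = Real.exp (lam0*s) * (u/(Real.exp (lam1*s)-u)
            - (t/(Real.exp (lam1*s)-t)
              + Real.exp (lam1*s)/(Real.exp (lam1*s)-t)^2*(u-t))) := by ring
    rw [key]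
    exact mul_nonneg hc.le (sub_nonneg.2 hkt)
  have hsub : IntegrableOn (fun s : ℝ =>
      u * (Real.exp (lam0*s)/(Real.exp (lam1*s)-u))
        - t * (Real.exp (lam0*s)/(Real.exp (lam1*s)-t))) (Ioi (0:ℝ)) := hut.sub htt
  rw [integral_sub hsub hgt, integral_sub hut htt,
    integral_const_mul, integral_const_mul, integral_const_mul, ← heq] at hnn
  have h2 := mul_le_mul_of_nonneg_left hnn hmu.le
  have e1 : mu*u*Real.exp (lam1*y)/(lam1-lam0)
      = mu*(u*(Real.exp (lam1*y)/(lam1-lam0))) := by ring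
  have e2 : mu*t*Real.exp (lam1*y)/(lam1-lam0)
      = mu*(t*(Real.exp (lam1*y)/(lam1-lam0))) := by ring
  nlinarith [h2]

lemma Gmono (hlam0 : lam0 < 0) (hlam1 : 0 < lam1) {a b : ℝ} (ha : 0 ≤ a) (hab : a < b)
    (hb : b < 1) :
    (∫ s in Ioi (0:ℝ), Real.exp (lam1*s)/(Real.exp (lam1*s)-a)^2 * Real.exp (lam0*s))
      < ∫ s in Ioi (0:ℝ), Real.exp (lam1*s)/(Real.exp (lam1*s)-b)^2 * Real.exp (lam0*s) := by
  apply integral_lt (int2 hlam0 hlam1 ha (hab.trans hb))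
    (int2 hlam0 hlam1 (ha.trans hab.le) hb)
  intro s hs
  have hA : (1:ℝ) ≤ Real.exp (lam1*s) := Real.one_le_exp (mul_pos hlam1 (mem_Ioi.1 hs)).le
  have hdb : 0 < Real.exp (lam1*s) - b := by linarith
  have h2 : (Real.exp (lam1*s) - b)^2 < (Real.exp (lam1*s) - a)^2 := by nlinarith
  exact mul_lt_mul_of_pos_right
    (div_lt_div_of_pos_left (by linarith) (by positivity) h2) (Real.exp_pos _)

lemma partExists {y : ℝ} (hlam0 : lam0 < 0) (hlam1 : 0 < lam1) (hy : 0 < y) :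
    ∃ t ∈ Set.Ioo (0:ℝ) 1, Real.exp (lam1 * y) / (lam1 - lam0) =
      ∫ s in Ioi (0:ℝ), Real.exp (lam1*s)/(Real.exp (lam1*s)-t)^2 * Real.exp (lam0*s) := by
  have hd : (0:ℝ) < lam1 - lam0 := by linarith
  set E : ℝ := Real.exp (lam1 * y) / (lam1 - lam0) with hE
  have hEpos : 0 < E := by positivity
  set G : ℝ → ℝ := fun t => ∫ s in Ioi (0:ℝ),
    Real.exp (lam1*s)/(Real.exp (lam1*s)-t)^2 * Real.exp (lam0*s) with hG
  -- the small point
  set r : ℝ := Real.exp (-(lam1*y)/2) with hr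
  have hr0 : 0 < r := Real.exp_pos _
  have hr1 : r < 1 := Real.exp_lt_one_iff.2 (by nlinarith)
  set t1 : ℝ := (1 - r)/2 with ht1def
  have ht10 : 0 < t1 := by rw [ht1def]; linarith
  have ht11 : t1 < 1 := by rw [ht1def]; linarith
  have h1mt1 : r < 1 - t1 := by rw [ht1def]; linarith
  have hrsq : r^2 = Real.exp (-(lam1*y)) := by
    rw [hr, sq, ← Real.exp_add]
    ring_nf
  have hrinv : (r^2)⁻¹ = Real.exp (lam1*y) := by
    rw [hrsq, ← Real.exp_neg, neg_neg]
  have hGt1 : G t1 < E := by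
    have hle := int2_le hlam0 hlam1 ht10.le ht11
    have hlt : (1-t1)⁻¹^2 < Real.exp (lam1*y) := by
      rw [← hrinv]
      have : (1-t1)⁻¹ < r⁻¹ := inv_strictAnti₀ hr0 h1mt1
      calc (1-t1)⁻¹^2 < r⁻¹^2 := by
            have h0 : (0:ℝ) < (1-t1)⁻¹ := inv_pos.2 (by linarith)
            nlinarith
        _ = (r^2)⁻¹ := by rw [← inv_pow]
    calc G t1 ≤ (1-t1)⁻¹^2 * (lam1-lam0)⁻¹ := hle
      _ < Real.exp (lam1*y) * (lam1-lam0)⁻¹ :=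
          mul_lt_mul_of_pos_right hlt (inv_pos.2 hd)
      _ = E := by rw [hE]; ring
  -- the point near 1
  set C : ℝ := Real.exp lam0 / lam1 with hC
  have hCpos : 0 < C := by rw [hC]; exact div_pos (Real.exp_pos _) hlam1
  have hexp1 : (1:ℝ) < Real.exp lam1 := by
    rw [show (1:ℝ) = Real.exp 0 from (Real.exp_zero).symm]
    exact Real.exp_lt_exp.2 hlam1
  set D : ℝ := (Real.exp lam1 - 1)⁻¹ with hD
  have hDpos : 0 < D := by rw [hD]; exact inv_pos.2 (by linarith)
  have hX : 0 < E + C*D + 1 := by nlinarith [mul_pos hCpos hDpos]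
  set eps : ℝ := min (1/2) (C/(E + C*D + 1)) with heps
  have heps0 : 0 < eps := lt_min (by norm_num) (div_pos hCpos hX)
  have heps2 : eps ≤ 1/2 := min_le_left _ _
  set t2 : ℝ := 1 - eps with ht2def
  have ht20 : 0 < t2 := by rw [ht2def]; linarith
  have ht21 : t2 < 1 := by rw [ht2def]; linarith
  have hGt2 : E < G t2 := by
    have hlow := G_lower hlam0 hlam1 (theta := t2) ht20.le ht21
    have hsub : (1:ℝ) - t2 = eps := by rw [ht2def]; ring
    rw [hsub] at hlow
    have hXle : (Real.exp lam1 - t2)⁻¹ ≤ D := by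
      rw [hD]
      exact inv_anti₀ (by linarith) (by rw [ht2def]; linarith)
    have hmul : eps * (E + C*D + 1) ≤ C := by
      have := min_le_right (1/2 : ℝ) (C/(E + C*D + 1))
      rw [← heps] at this
      calc eps * (E + C*D + 1) ≤ C/(E + C*D + 1) * (E + C*D + 1) :=
            mul_le_mul_of_nonneg_right this hX.le
        _ = C := div_mul_cancel₀ _ hX.ne'
    have hCe : E + C*D + 1 ≤ C * eps⁻¹ := by
      have h' : E + C*D + 1 ≤ C / eps := (le_div_iff₀ heps0).2 (by linarith [hmul])
      rwa [div_eq_mul_inv] at h'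
    calc E < E + 1 := by linarith
      _ ≤ C * eps⁻¹ - C * D := by linarith
      _ ≤ C * (eps⁻¹ - (Real.exp lam1 - t2)⁻¹) := by
          nlinarith [mul_le_mul_of_nonneg_left hXle hCpos.le]
      _ ≤ G t2 := hlow
  -- IVT
  have ht12 : t1 < t2 := by
    by_contra hcon
    push_neg at hcon
    rcases eq_or_lt_of_le hcon with hcon2|hcon2
    · rw [hcon2] at hGt2; linarith
    · have := Gmono hlam0 hlam1 ht20.le hcon2 ht11
      rw [hG] at *
      linarith
  have hcontG : ContinuousOn G (Icc t1 t2) := fun t ht =>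
    (G_cont hlam0 hlam1 (lt_of_lt_of_le ht10 ht.1) (lt_of_le_of_lt ht.2 ht21)).continuousWithinAt
  have := intermediate_value_Ioo ht12.le hcontG
  have hmem : E ∈ Ioo (G t1) (G t2) := ⟨hGt1, hGt2⟩
  obtain ⟨t, htmem, htE⟩ := this hmem
  exact ⟨t, ⟨ht10.trans htmem.1, htmem.2.trans ht21⟩, htE.symm⟩

lemma partCelem {mu y : ℝ} (hlam0 : lam0 < 0) (hlam1 : 0 < lam1) (hmu : 0 < mu)
    (hy : 0 < y) :
    ∃ t ∈ Set.Ioo (0:ℝ) 1,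
      0 < mu * t * Real.exp (lam1 * y) / (lam1 - lam0) -
        mu * t * ∫ s in Ioi (0:ℝ), Real.exp (lam0 * s) / (Real.exp (lam1 * s) - t) := by
  have hd : (0:ℝ) < lam1 - lam0 := by linarith
  set r : ℝ := Real.exp (-(lam1*y)/2) with hr
  have hr0 : 0 < r := Real.exp_pos _
  have hr1 : r < 1 := Real.exp_lt_one_iff.2 (by nlinarith)
  set t1 : ℝ := (1-r)/2 with ht1def
  have ht10 : 0 < t1 := by rw [ht1def]; linarith
  have ht11 : t1 < 1 := by rw [ht1def]; linarith
  have h1mt1 : r < 1 - t1 := by rw [ht1def]; linarith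
  refine ⟨t1, ⟨ht10, ht11⟩, ?_⟩
  have hIle := int1_le hlam0 hlam1 ht10.le ht11
  have hinv : (1-t1)⁻¹ < Real.exp (lam1*y) := by
    have h1 : (1-t1)⁻¹ < r⁻¹ := inv_strictAnti₀ hr0 h1mt1
    have h2 : r⁻¹ = Real.exp ((lam1*y)/2) := by
      rw [hr, ← Real.exp_neg]
      ring_nf
    have h3 : Real.exp ((lam1*y)/2) < Real.exp (lam1*y) :=
      Real.exp_lt_exp.2 (by nlinarith)
    calc (1-t1)⁻¹ < r⁻¹ := h1
      _ = _ := h2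
      _ < _ := h3
  have hI : (∫ s in Ioi (0:ℝ), Real.exp (lam0*s)/(Real.exp (lam1*s)-t1))
      < Real.exp (lam1*y) * (lam1-lam0)⁻¹ :=
    lt_of_le_of_lt hIle (mul_lt_mul_of_pos_right hinv (inv_pos.2 hd))
  have heq : mu * t1 * Real.exp (lam1*y) / (lam1-lam0)
      = mu * t1 * (Real.exp (lam1*y) * (lam1-lam0)⁻¹) := by ring
  rw [heq]
  nlinarith [mul_pos (mul_pos hmu ht10) (sub_pos.2 hI)]

end Stmt17

open Stmt17 Set

theorem stmt_17 (lam0 lam1 mu y : ℝ) (hlam0 : lam0 < 0) (hlam1 : 0 < lam1)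
    (hmu : 0 < mu) (hy : 0 < y) :
    StrictConcaveOn ℝ (Set.Ioo (0:ℝ) 1) (fun theta : ℝ =>
        mu * theta * Real.exp (lam1 * y) / (lam1 - lam0) -
          mu * theta * ∫ s in Set.Ioi (0:ℝ),
            Real.exp (lam0 * s) / (Real.exp (lam1 * s) - theta)) ∧
    (∃! theta : ℝ, theta ∈ Set.Ioo (0:ℝ) 1 ∧
      Real.exp (lam1 * y) / (lam1 - lam0) =
        ∫ s in Set.Ioi (0:ℝ),
          Real.exp (lam1 * s) / (Real.exp (lam1 * s) - theta) ^ 2 * Real.exp (lam0 * s)) ∧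
    (∀ theta : ℝ, theta ∈ Set.Ioo (0:ℝ) 1 →
      Real.exp (lam1 * y) / (lam1 - lam0) =
        (∫ s in Set.Ioi (0:ℝ),
          Real.exp (lam1 * s) / (Real.exp (lam1 * s) - theta) ^ 2 * Real.exp (lam0 * s)) →
      IsGreatest ((fun theta : ℝ =>
          mu * theta * Real.exp (lam1 * y) / (lam1 - lam0) -
            mu * theta * ∫ s in Set.Ioi (0:ℝ),
              Real.exp (lam0 * s) / (Real.exp (lam1 * s) - theta)) '' Set.Ioo (0:ℝ) 1)
        (mu * theta * Real.exp (lam1 * y) / (lam1 - lam0) -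
          mu * theta * ∫ s in Set.Ioi (0:ℝ),
            Real.exp (lam0 * s) / (Real.exp (lam1 * s) - theta))) ∧
    0 < sSup ((fun theta : ℝ =>
        mu * theta * Real.exp (lam1 * y) / (lam1 - lam0) -
          mu * theta * ∫ s in Set.Ioi (0:ℝ),
            Real.exp (lam0 * s) / (Real.exp (lam1 * s) - theta)) '' Set.Ioo (0:ℝ) 1) := by
  obtain ⟨t0, ht0mem, ht0eq⟩ := partExists hlam0 hlam1 hy
  have hgreat : ∀ t ∈ Set.Ioo (0:ℝ) 1, (Real.exp (lam1 * y) / (lam1 - lam0) =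
      ∫ s in Set.Ioi (0:ℝ),
        Real.exp (lam1 * s) / (Real.exp (lam1 * s) - t) ^ 2 * Real.exp (lam0 * s)) →
      IsGreatest ((fun theta : ℝ =>
          mu * theta * Real.exp (lam1 * y) / (lam1 - lam0) -
            mu * theta * ∫ s in Set.Ioi (0:ℝ),
              Real.exp (lam0 * s) / (Real.exp (lam1 * s) - theta)) '' Set.Ioo (0:ℝ) 1)
        (mu * t * Real.exp (lam1 * y) / (lam1 - lam0) -
          mu * t * ∫ s in Set.Ioi (0:ℝ),
            Real.exp (lam0 * s) / (Real.exp (lam1 * s) - t)) := by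
    intro t htm heq
    constructor
    · exact ⟨t, htm, rfl⟩
    · rintro v ⟨u, hum, rfl⟩
      exact partMax hlam0 hlam1 hmu htm.1 htm.2 heq hum.1 hum.2
  refine ⟨partA hlam0 hlam1 hmu, ⟨t0, ⟨ht0mem, ht0eq⟩, ?_⟩, hgreat, ?_⟩
  · rintro t' ⟨ht'm, ht'eq⟩
    by_contra hne
    rcases lt_or_gt_of_ne hne with hlt|hlt
    · have hg := Gmono hlam0 hlam1 ht'm.1.le hlt ht0mem.2
      rw [← ht0eq, ← ht'eq] at hg
      exact lt_irrefl _ hg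
    · have hg := Gmono hlam0 hlam1 ht0mem.1.le hlt ht'm.2
      rw [← ht0eq, ← ht'eq] at hg
      exact lt_irrefl _ hg
  · obtain ⟨t1, ht1m, ht1pos⟩ := partCelem hlam0 hlam1 hmu hy
    have hbdd := (hgreat t0 ht0mem ht0eq).bddAbove
    exact lt_of_lt_of_le ht1pos (le_csSup hbdd ⟨t1, ht1m, rfl⟩)
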